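/- With the setup of the arborescence-cut characterization: if p is a directed path from u to v in G' of total length at most K, and T is an arborescence rooted at u with d_T(u,v) > K, then some edge of p belongs to S_T, i.e., there exists an index i such that ℓ(p_i, p_{i+1}) < L_T(p_{i+1}) − L_T(p_i). -/

import Mathlib

/-- `p` is a directed path from `u` to `v` along relation `R`. -/
def IsPathFrom {V : Type} (R : V → V → Prop) (u v : V) (p : List V) : Prop :=
  p ≠ [] ∧ p.head? = some u ∧ p.getLast? = some v ∧ p.Chain' R

/-- Total length of a path, summing edge lengths over consecutive pairs. -/
def pathLen {V : Type} (ℓ : V → V → ℝ) (p : List V) : ℝ :=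
  ((p.zip p.tail).map fun e => ℓ e.1 e.2).sum

/-- An arborescence rooted at `u`, with `L w = d_T(u,w)` the tree distance. -/
structure Arborescence {V : Type} (E : V → V → Prop) (ℓ : V → V → ℝ) (u : V) where
  par : V → V
  L : V → ℝ
  par_root : par u = u
  reach : ∀ w, ∃ j, par^[j] w = u
  edge : ∀ w, w ≠ u → E (par w) w
  L_root : L u = 0
  L_step : ∀ w, w ≠ u → L w = L (par w) + ℓ (par w) w


lemma pathLen_cons' {V : Type} (ℓ : V → V → ℝ) (a b : V) (t : List V) :
    pathLen ℓ (a :: b :: t) = ℓ a b + pathLen ℓ (b :: t) := by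
  simp [pathLen]

lemma aux_chain {V : Type} (ℓ : V → V → ℝ) (L : V → ℝ) :
    ∀ (p : List V) (a : V), List.Chain' (fun x y => L y ≤ L x + ℓ x y) (a :: p) →
      L ((a :: p).getLast (by simp)) ≤ L a + pathLen ℓ (a :: p) := by
  intro p
  induction p with
  | nil => intro a _; simp [pathLen]
  | cons b t ih =>
    intro a hc
    simp only [List.Chain', List.isChain_cons_cons] at hc
    have h2 := ih b hc.2
    rw [pathLen_cons']
    have hl : (a :: b :: t).getLast (by simp) = (b :: t).getLast (by simp) := by
      rw [List.getLast_cons]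
    rw [hl]
    linarith [hc.1]

/-- If `p` is a `u`–`v` path in `G'` of length at most `K` and `T` is an
arborescence rooted at `u` with `d_T(u,v) > K`, then some edge of `p` is in
`S_T`, i.e. `ℓ(pᵢ,pᵢ₊₁) < L_T(pᵢ₊₁) − L_T(pᵢ)` for some `i`. -/
theorem stmt1 {V : Type} [Fintype V] (E : V → V → Prop) (ℓ : V → V → ℝ)
    (hℓ : ∀ a b, 0 ≤ ℓ a b) (u v : V) (K : ℝ)
    (T : Arborescence E ℓ u) (hT : K < T.L v)
    (p : List V) (hp : IsPathFrom E u v p) (hlen : pathLen ℓ p ≤ K) :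
    ∃ i, ∃ h : i + 1 < p.length,
      ℓ (p.get ⟨i, by omega⟩) (p.get ⟨i + 1, h⟩) <
        T.L (p.get ⟨i + 1, h⟩) - T.L (p.get ⟨i, by omega⟩) := by
  by_contra hcon
  push_neg at hcon
  obtain ⟨hne, hh, hlast, _⟩ := hp
  obtain ⟨a, t, rfl⟩ := List.exists_cons_of_ne_nil hne
  have ha : a = u := by simpa using hh
  subst ha
  have hchain : List.Chain' (fun x y => T.L y ≤ T.L x + ℓ x y) (a :: t) := by
    simp only [List.Chain', List.isChain_iff_getElem]
    intro i hi
    have h1 : i + 1 < (a :: t).length := by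
      simp at hi ⊢; omega
    have := hcon i h1
    simp only [List.get_eq_getElem] at this
    linarith
  have hineq := aux_chain ℓ T.L t a hchain
  have hv : (a :: t).getLast (by simp) = v := by
    have := List.getLast?_eq_getLast (l := a :: t) (by simp)
    rw [this] at hlast
    exact Option.some_injective _ hlast
  rw [hv, T.L_root] at hineq
  linarith
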